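/- Let A be a strongly connected signed interaction matrix. Then the following are equivalent: (i) there exist a vector s ∈ ℝ^n with sᵀ·|A| = sᵀ and Σ_j s_j = 1 (s being the unique such left eigenvector of |A|) and a sign assignment g : {1,…,n} → {−1, 1} such that for every initial vector b₀ ∈ ℝ^n and every agent i, lim_{t→∞} (A^t b₀)_i = g(i) · Σ_{j=1}^n g(j)·s_j·(b₀)_j (so every agent's limiting opinion is one of the two values ±Σ_j g(j)s_j(b₀)_j); (ii) A is opposition bipartite and aperiodic. -/

import Mathlib

open Filter

variable {n : ℕ}

/-- Entrywise absolute value of a matrix. -/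
def absMat (A : Matrix (Fin n) (Fin n) ℝ) : Matrix (Fin n) (Fin n) ℝ :=
  A.map fun x => |x|

/-- `A` is strongly connected: for all `i j` there is `k ≥ 1` with `(|A|^k)_{ij} > 0`. -/
def StronglyConnected (A : Matrix (Fin n) (Fin n) ℝ) : Prop :=
  ∀ i j, ∃ k : ℕ, 1 ≤ k ∧ 0 < (absMat A ^ k) i j

/-- `A` is aperiodic: for each `i`, the gcd of `{k ≥ 1 : (|A|^k)_{ii} > 0}` is `1`,
phrased as: every common divisor of that set equals `1`. -/
def Aperiodic (A : Matrix (Fin n) (Fin n) ℝ) : Prop :=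
  ∀ i, ∀ d : ℕ, (∀ k : ℕ, 1 ≤ k → 0 < (absMat A ^ k) i i → d ∣ k) → d = 1

/-- `A` is opposition bipartite: a two-set partition (given by `S` and its
complement) with nonnegative entries within sets and nonpositive across. -/
def OppBip (A : Matrix (Fin n) (Fin n) ℝ) : Prop :=
  ∃ S : Set (Fin n), ∀ i j,
    (((i ∈ S ∧ j ∈ S) ∨ (i ∉ S ∧ j ∉ S)) → 0 ≤ A i j) ∧
    (((i ∈ S ∧ j ∉ S) ∨ (i ∉ S ∧ j ∈ S)) → A i j ≤ 0)

/-- `A` is reverse opposition bipartite: nonpositive entries within sets and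
nonnegative across. -/
def RevOppBip (A : Matrix (Fin n) (Fin n) ℝ) : Prop :=
  ∃ S : Set (Fin n), ∀ i j,
    (((i ∈ S ∧ j ∈ S) ∨ (i ∉ S ∧ j ∉ S)) → A i j ≤ 0) ∧
    (((i ∈ S ∧ j ∉ S) ∨ (i ∉ S ∧ j ∈ S)) → 0 ≤ A i j)

/-- `A` is divergent: some initial vector has no limit under iteration. -/
def Divergent (A : Matrix (Fin n) (Fin n) ℝ) : Prop :=
  ∃ b₀ : Fin n → ℝ, ¬ ∃ L : Fin n → ℝ,
    Tendsto (fun t => (A ^ t).mulVec b₀) atTop (nhds L)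

/-- `A` induces a neutral consensus: iterates converge to `0` from every start. -/
def NeutralConsensus (A : Matrix (Fin n) (Fin n) ℝ) : Prop :=
  ∀ b₀ : Fin n → ℝ, Tendsto (fun t => (A ^ t).mulVec b₀) atTop (nhds 0)

/-- A vector is a polarization if its entries take at most two values. -/
def IsPolarization (p : Fin n → ℝ) : Prop :=
  ∃ a b : ℝ, ∀ i, p i = a ∨ p i = b

/-- `A` induces a nontrivial polarization: from every start the limit exists
and is a polarization, and from some start the limit is nonzero. -/
def InducesNontrivialPolarization (A : Matrix (Fin n) (Fin n) ℝ) : Prop :=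
  (∀ b₀ : Fin n → ℝ, ∃ L : Fin n → ℝ,
      Tendsto (fun t => (A ^ t).mulVec b₀) atTop (nhds L) ∧ IsPolarization L) ∧
  (∃ (b₀ L : Fin n → ℝ),
      Tendsto (fun t => (A ^ t).mulVec b₀) atTop (nhds L) ∧ L ≠ 0)



section Helpers

variable {n : ℕ}

lemma pow_entry_nonneg {M : Matrix (Fin n) (Fin n) ℝ} (h : ∀ i j, 0 ≤ M i j) (k : ℕ) :
    ∀ i j, 0 ≤ (M ^ k) i j := by
  induction k with
  | zero => intro i j; simp [Matrix.one_apply]; split <;> norm_num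
  | succ k ih =>
    intro i j
    rw [pow_succ, Matrix.mul_apply]
    exact Finset.sum_nonneg fun l _ => mul_nonneg (ih i l) (h l j)

lemma pow_row_sum {M : Matrix (Fin n) (Fin n) ℝ} (hr : ∀ i, ∑ j, M i j = 1) (k : ℕ) :
    ∀ i, ∑ j, (M ^ k) i j = 1 := by
  induction k with
  | zero => intro i; simp [Matrix.one_apply]
  | succ k ih =>
    intro i
    simp only [pow_succ, Matrix.mul_apply]
    rw [Finset.sum_comm]
    calc ∑ l, ∑ j, (M ^ k) i l * M l j = ∑ l, (M ^ k) i l * ∑ j, M l j := by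
          simp [Finset.mul_sum]
      _ = 1 := by simp only [hr, mul_one]; exact ih i

lemma pow_add_entry_ge {M : Matrix (Fin n) (Fin n) ℝ} (h : ∀ i j, 0 ≤ M i j)
    (a b : ℕ) (i l j : Fin n) : (M ^ a) i l * (M ^ b) l j ≤ (M ^ (a + b)) i j := by
  rw [pow_add, Matrix.mul_apply]
  exact Finset.single_le_sum (f := fun x => (M ^ a) i x * (M ^ b) x j)
    (fun x _ => mul_nonneg (pow_entry_nonneg h a i x) (pow_entry_nonneg h b x j))
    (Finset.mem_univ l)

lemma diag_pow_two_mul_ge {M : Matrix (Fin n) (Fin n) ℝ} (hn : 0 < n)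
    (hsym : M.IsSymm) (hr : ∀ i, ∑ j, M i j = 1) (k : ℕ) (i : Fin n) :
    (1 : ℝ) / n ≤ (M ^ (2 * k)) i i := by
  have hsk : (M ^ k).IsSymm := hsym.pow k
  have hdiag : (M ^ (2 * k)) i i = ∑ j, ((M ^ k) i j) ^ 2 := by
    rw [two_mul, pow_add, Matrix.mul_apply]
    congr 1; funext j
    rw [sq]
    congr 1
    exact (Matrix.IsSymm.apply hsk i j).symm ▸ rfl
  rw [hdiag]
  have hcs := sq_sum_le_card_mul_sum_sq (s := (Finset.univ : Finset (Fin n)))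
    (f := fun j => (M ^ k) i j)
  rw [pow_row_sum hr k i] at hcs
  simp only [Finset.card_univ, Fintype.card_fin, one_pow] at hcs
  rw [div_le_iff₀ (by positivity)]
  calc (1:ℝ) ≤ (n : ℝ) * ∑ j, ((M^k) i j)^2 := by exact_mod_cast hcs
    _ = (∑ j, ((M^k) i j)^2) * n := mul_comm _ _

lemma mulVec_le_sup {P : Matrix (Fin n) (Fin n) ℝ} (hne : (Finset.univ : Finset (Fin n)).Nonempty)
    (h0 : ∀ i j, 0 ≤ P i j) (hr : ∀ i, ∑ j, P i j = 1) (v : Fin n → ℝ) (i : Fin n) :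
    P.mulVec v i ≤ Finset.univ.sup' hne v := by
  unfold Matrix.mulVec dotProduct
  calc ∑ j, P i j * v j ≤ ∑ j, P i j * Finset.univ.sup' hne v :=
        Finset.sum_le_sum fun j _ => mul_le_mul_of_nonneg_left
          (Finset.le_sup' v (Finset.mem_univ j)) (h0 i j)
    _ = Finset.univ.sup' hne v := by rw [← Finset.sum_mul, hr i, one_mul]

lemma inf_le_mulVec {P : Matrix (Fin n) (Fin n) ℝ} (hne : (Finset.univ : Finset (Fin n)).Nonempty)
    (h0 : ∀ i j, 0 ≤ P i j) (hr : ∀ i, ∑ j, P i j = 1) (v : Fin n → ℝ) (i : Fin n) :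
    Finset.univ.inf' hne v ≤ P.mulVec v i := by
  unfold Matrix.mulVec dotProduct
  calc (Finset.univ.inf' hne v) = ∑ j, P i j * Finset.univ.inf' hne v := by
        rw [← Finset.sum_mul, hr i, one_mul]
    _ ≤ ∑ j, P i j * v j :=
        Finset.sum_le_sum fun j _ => mul_le_mul_of_nonneg_left
          (Finset.inf'_le v (Finset.mem_univ j)) (h0 i j)

lemma osc_contract {P : Matrix (Fin n) (Fin n) ℝ} (hne : (Finset.univ : Finset (Fin n)).Nonempty)
    {ε : ℝ} (hε : 0 ≤ ε) (h0 : ∀ i j, ε ≤ P i j) (hr : ∀ i, ∑ j, P i j = 1) (v : Fin n → ℝ) :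
    Finset.univ.sup' hne (P.mulVec v) - Finset.univ.inf' hne (P.mulVec v)
      ≤ (1 - 2 * ε) * (Finset.univ.sup' hne v - Finset.univ.inf' hne v) := by
  set S := Finset.univ.sup' hne v with hS
  set I := Finset.univ.inf' hne v with hI
  have hIS : I ≤ S := by
    obtain ⟨i⟩ := Finset.nonempty_coe_sort.mp (by exact Finset.Nonempty.coe_sort hne)
    exact le_trans (Finset.inf'_le v (Finset.mem_univ i)) (Finset.le_sup' v (Finset.mem_univ i))
  obtain ⟨j₀, _, hj₀⟩ := Finset.exists_mem_eq_inf' hne v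
  obtain ⟨j₁, _, hj₁⟩ := Finset.exists_mem_eq_sup' hne v
  have hub : ∀ i, P.mulVec v i ≤ (1 - ε) * S + ε * I := by
    intro i
    have hmv : P.mulVec v i = ∑ j, P i j * v j := rfl
    rw [hmv]
    have key : ∑ j, P i j * v j ≤ (∑ j, P i j * S) - P i j₀ * (S - I) := by
      have hterm : ∀ j, P i j * v j ≤ P i j * S - (if j = j₀ then P i j₀ * (S - I) else 0) := by
        intro j
        by_cases hj : j = j₀
        · subst hj
          simp only [if_pos rfl]
          rw [← hj₀]
          simp only [if_true]
          exact le_of_eq (by ring)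
        · simp only [if_neg hj, sub_zero]
          exact mul_le_mul_of_nonneg_left (Finset.le_sup' v (Finset.mem_univ j))
            (le_trans hε (h0 i j))
      calc ∑ j, P i j * v j ≤ ∑ j, (P i j * S - (if j = j₀ then P i j₀ * (S - I) else 0)) :=
            Finset.sum_le_sum fun j _ => hterm j
        _ = (∑ j, P i j * S) - P i j₀ * (S - I) := by
            rw [Finset.sum_sub_distrib, Finset.sum_ite_eq' Finset.univ j₀]
            simp
    have h1 : ∑ j, P i j * S = S := by rw [← Finset.sum_mul, hr i, one_mul]
    rw [h1] at key
    have h2 : S - P i j₀ * (S - I) ≤ S - ε * (S - I) :=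
      sub_le_sub_left (mul_le_mul_of_nonneg_right (h0 i j₀) (by linarith)) _
    calc ∑ j, P i j * v j ≤ S - ε * (S - I) := le_trans key h2
      _ = (1 - ε) * S + ε * I := by ring
  have hlb : ∀ i, ε * S + (1 - ε) * I ≤ P.mulVec v i := by
    intro i
    have hmv : P.mulVec v i = ∑ j, P i j * v j := rfl
    rw [hmv]
    have key : (∑ j, P i j * I) + P i j₁ * (S - I) ≤ ∑ j, P i j * v j := by
      have hterm : ∀ j, P i j * I + (if j = j₁ then P i j₁ * (S - I) else 0) ≤ P i j * v j := by
        intro j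
        by_cases hj : j = j₁
        · subst hj
          simp only [if_pos rfl]
          rw [← hj₁]
          simp only [if_true]
          exact le_of_eq (by ring)
        · simp only [if_neg hj, add_zero]
          exact mul_le_mul_of_nonneg_left (Finset.inf'_le v (Finset.mem_univ j))
            (le_trans hε (h0 i j))
      calc (∑ j, P i j * I) + P i j₁ * (S - I)
            = ∑ j, (P i j * I + (if j = j₁ then P i j₁ * (S - I) else 0)) := by
            rw [Finset.sum_add_distrib, Finset.sum_ite_eq' Finset.univ j₁]
            simp
        _ ≤ ∑ j, P i j * v j := Finset.sum_le_sum fun j _ => hterm j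
    have h1 : ∑ j, P i j * I = I := by rw [← Finset.sum_mul, hr i, one_mul]
    rw [h1] at key
    have h2 : I + ε * (S - I) ≤ I + P i j₁ * (S - I) :=
      by have := mul_le_mul_of_nonneg_right (h0 i j₁) (by linarith : (0:ℝ) ≤ S - I); linarith
    calc ε * S + (1 - ε) * I = I + ε * (S - I) := by ring
      _ ≤ ∑ j, P i j * v j := le_trans h2 key
  have hsup : Finset.univ.sup' hne (P.mulVec v) ≤ (1 - ε) * S + ε * I :=
    Finset.sup'_le hne _ fun i _ => hub i
  have hinf : ε * S + (1 - ε) * I ≤ Finset.univ.inf' hne (P.mulVec v) :=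
    Finset.le_inf' hne _ fun i _ => hlb i
  calc Finset.univ.sup' hne (P.mulVec v) - Finset.univ.inf' hne (P.mulVec v)
      ≤ ((1 - ε) * S + ε * I) - (ε * S + (1 - ε) * I) := by linarith
    _ = (1 - 2 * ε) * (S - I) := by ring

lemma stoch_conv (hn : 2 ≤ n) {M : Matrix (Fin n) (Fin n) ℝ}
    (h0 : ∀ i j, 0 ≤ M i j) (hr : ∀ i, ∑ j, M i j = 1) (hsym : M.IsSymm)
    {m : ℕ} (hm : 1 ≤ m) {ε : ℝ} (hε : 0 < ε) (hpos : ∀ i j, ε ≤ (M ^ m) i j)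
    (v : Fin n → ℝ) (i : Fin n) :
    Tendsto (fun t => (M ^ t).mulVec v i) atTop (nhds ((∑ j, v j) / n)) := by
  have hne : (Finset.univ : Finset (Fin n)).Nonempty :=
    ⟨⟨0, by omega⟩, Finset.mem_univ _⟩
  have hnpos : (0:ℝ) < n := by
    have : (2:ℝ) ≤ n := by exact_mod_cast hn
    linarith
  set w : ℕ → Fin n → ℝ := fun t => (M ^ t).mulVec v with hw
  set d : ℕ → ℝ := fun t => Finset.univ.sup' hne (w t) - Finset.univ.inf' hne (w t) with hd
  set μ : ℝ := (∑ j, v j) / n with hμ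
  set r : ℝ := 1 - 2 * ε with hrr
  have hεhalf : 2 * ε ≤ 1 := by
    have i0 : Fin n := ⟨0, by omega⟩
    have h1 : ∑ j, (M ^ m) i0 j = 1 := pow_row_sum hr m i0
    have h2 : ∑ _j : Fin n, ε ≤ ∑ j, (M ^ m) i0 j := Finset.sum_le_sum fun j _ => hpos i0 j
    rw [h1, Finset.sum_const, Finset.card_univ, Fintype.card_fin, nsmul_eq_mul] at h2
    have hc : (2:ℝ) ≤ n := by exact_mod_cast hn
    linarith [mul_le_mul_of_nonneg_right hc hε.le, h2]
  have hr0 : 0 ≤ r := by simp only [hrr]; linarith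
  have hr1 : r < 1 := by simp only [hrr]; linarith
  have hws : ∀ t s, w (t + s) = (M ^ s).mulVec (w t) := by
    intro t s
    simp only [hw, Matrix.mulVec_mulVec, ← pow_add, add_comm s t]
  have hd0 : ∀ t, 0 ≤ d t := by
    intro t
    have := le_trans (Finset.inf'_le (w t) (Finset.mem_univ i))
      (Finset.le_sup' (w t) (Finset.mem_univ i))
    simp only [hd]; linarith
  have hmono : ∀ t s, d (t + s) ≤ d t := by
    intro t s
    have hsup : Finset.univ.sup' hne (w (t + s)) ≤ Finset.univ.sup' hne (w t) := by
      rw [hws t s]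
      exact Finset.sup'_le hne _ fun j _ =>
        mulVec_le_sup hne (pow_entry_nonneg h0 s) (pow_row_sum hr s) (w t) j
    have hinf : Finset.univ.inf' hne (w t) ≤ Finset.univ.inf' hne (w (t + s)) := by
      rw [hws t s]
      exact Finset.le_inf' hne _ fun j _ =>
        inf_le_mulVec hne (pow_entry_nonneg h0 s) (pow_row_sum hr s) (w t) j
    simp only [hd]; linarith
  have hcontr : ∀ t, d (t + m) ≤ r * d t := by
    intro t
    have := osc_contract hne hε.le hpos (pow_row_sum hr m) (w t)
    rw [← hws t m] at this
    exact this
  have hgeo : ∀ q, d (m * q) ≤ r ^ q * d 0 := by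
    intro q
    induction q with
    | zero => simp
    | succ q ih =>
      calc d (m * (q + 1)) = d (m * q + m) := by ring_nf
        _ ≤ r * d (m * q) := hcontr (m * q)
        _ ≤ r * (r ^ q * d 0) := mul_le_mul_of_nonneg_left ih hr0
        _ = r ^ (q + 1) * d 0 := by ring
  have hdt : ∀ t, d t ≤ r ^ (t / m) * d 0 := by
    intro t
    have h1 : m * (t / m) + (t - m * (t / m)) = t := by
      have h2 : m * (t / m) ≤ t := by rw [mul_comm]; exact Nat.div_mul_le_self t m
      omega
    calc d t = d (m * (t / m) + (t - m * (t / m))) := by rw [h1]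
      _ ≤ d (m * (t / m)) := hmono _ _
      _ ≤ r ^ (t / m) * d 0 := hgeo _
  have hdiv : Tendsto (fun t : ℕ => t / m) atTop atTop := by
    apply tendsto_atTop_atTop.2
    intro b
    exact ⟨b * m, fun t ht => (Nat.le_div_iff_mul_le (by omega)).2 ht⟩
  have hrpow : Tendsto (fun t : ℕ => r ^ (t / m) * d 0) atTop (nhds 0) := by
    have h1 := (tendsto_pow_atTop_nhds_zero_of_lt_one hr0 hr1).comp hdiv
    have h2 := h1.mul_const (d 0)
    simpa using h2
  have hdzero : Tendsto d atTop (nhds 0) := squeeze_zero hd0 hdt hrpow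
  have hsum : ∀ t, ∑ j, w t j = ∑ j, v j := by
    intro t
    simp only [hw, Matrix.mulVec, dotProduct]
    rw [Finset.sum_comm]
    congr 1; funext j
    rw [← Finset.sum_mul]
    have hcol : ∑ i', (M ^ t) i' j = 1 := by
      have hs := hsym.pow t
      have hsw : ∀ i', (M ^ t) i' j = (M ^ t) j i' := fun i' => Matrix.IsSymm.apply hs j i'
      rw [Finset.sum_congr rfl fun i' _ => hsw i']
      exact pow_row_sum hr t j
    rw [hcol, one_mul]
  have hbound : ∀ t, |w t i - μ| ≤ d t := by
    intro t
    have hle : w t i ≤ Finset.univ.sup' hne (w t) := Finset.le_sup' (w t) (Finset.mem_univ i)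
    have hge : Finset.univ.inf' hne (w t) ≤ w t i := Finset.inf'_le (w t) (Finset.mem_univ i)
    have hμle : μ ≤ Finset.univ.sup' hne (w t) := by
      have hss : ∑ j, w t j ≤ ∑ _j : Fin n, Finset.univ.sup' hne (w t) :=
        Finset.sum_le_sum fun j _ => Finset.le_sup' (w t) (Finset.mem_univ j)
      rw [Finset.sum_const, Finset.card_univ, Fintype.card_fin, nsmul_eq_mul, hsum t] at hss
      rw [hμ, div_le_iff₀ hnpos]
      linarith [hss]
    have hμge : Finset.univ.inf' hne (w t) ≤ μ := by
      have hss : ∑ _j : Fin n, Finset.univ.inf' hne (w t) ≤ ∑ j, w t j :=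
        Finset.sum_le_sum fun j _ => Finset.inf'_le (w t) (Finset.mem_univ j)
      rw [Finset.sum_const, Finset.card_univ, Fintype.card_fin, nsmul_eq_mul, hsum t] at hss
      rw [hμ, le_div_iff₀ hnpos]
      linarith [hss]
    rw [abs_le]
    constructor <;> simp only [hd] <;> linarith
  have hfin : Tendsto (fun t => w t i - μ) atTop (nhds 0) := by
    apply squeeze_zero_norm _ hdzero
    intro t
    simpa [Real.norm_eq_abs] using hbound t
  have := hfin.add_const μ
  simpa using this

lemma primitive (hn : 2 ≤ n) {M : Matrix (Fin n) (Fin n) ℝ}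
    (h0 : ∀ i j, 0 ≤ M i j) (hr : ∀ i, ∑ j, M i j = 1) (hsym : M.IsSymm)
    (hsc' : ∀ i j, ∃ k, 1 ≤ k ∧ 0 < (M ^ k) i j)
    (hap' : ∀ i, ∀ d : ℕ, (∀ k, 1 ≤ k → 0 < (M ^ k) i i → d ∣ k) → d = 1) :
    ∃ m, 1 ≤ m ∧ ∀ i j, 0 < (M ^ m) i j := by
  have hrowpos : ∀ i, ∃ j, 0 < M i j := by
    intro i
    by_contra h
    push_neg at h
    have hz : ∀ j, M i j = 0 := fun j => le_antisymm (h j) (h0 i j)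
    have h1 := hr i
    rw [Finset.sum_congr rfl fun j _ => hz j] at h1
    simp at h1
  have hdiag2 : ∀ i, 0 < (M ^ 2) i i := by
    intro i
    obtain ⟨j, hj⟩ := hrowpos i
    have hji : 0 < M j i := by rw [hsym.apply i j]; exact hj
    have hle : M i j * M j i ≤ (M ^ 2) i i := by
      rw [sq, Matrix.mul_apply]
      exact Finset.single_le_sum (f := fun x => M i x * M x i)
        (fun x _ => mul_nonneg (h0 i x) (h0 x i)) (Finset.mem_univ j)
    nlinarith
  have hdadd : ∀ (a b : ℕ) (i : Fin n), 0 < (M ^ a) i i → 0 < (M ^ b) i i →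
      0 < (M ^ (a + b)) i i := by
    intro a b i ha hb
    exact lt_of_lt_of_le (mul_pos ha hb) (pow_add_entry_ge h0 a b i i i)
  have heven : ∀ (a : ℕ), 1 ≤ a → ∀ i, 0 < (M ^ (2 * a)) i i := by
    intro a ha i
    induction a with
    | zero => omega
    | succ a ih =>
      by_cases h : 1 ≤ a
      · have := hdadd (2 * a) 2 i (ih h) (hdiag2 i)
        rw [show 2 * (a + 1) = 2 * a + 2 by ring]
        exact this
      · have ha0 : a = 0 := by omega
        subst ha0
        simpa using hdiag2 i
  have hodd : ∀ i, ∃ k, Odd k ∧ 0 < (M ^ k) i i := by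
    intro i
    by_contra h
    push_neg at h
    have hdvd : ∀ k, 1 ≤ k → 0 < (M ^ k) i i → 2 ∣ k := by
      intro k hk hpos
      rcases Nat.even_or_odd k with he | ho
      · exact he.two_dvd
      · exact absurd hpos (not_lt.mpr (h k ho))
    exact absurd (hap' i 2 hdvd) (by norm_num)
  have hret : ∀ i, ∃ K, 1 ≤ K ∧ ∀ s, K ≤ s → 0 < (M ^ s) i i := by
    intro i
    obtain ⟨k, hk_odd, hk_pos⟩ := hodd i
    have hk1 : 1 ≤ k := hk_odd.pos
    refine ⟨k, hk1, fun s hs => ?_⟩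
    rcases Nat.even_or_odd s with he | ho
    · obtain ⟨a, ha⟩ := he
      have ha1 : 1 ≤ a := by omega
      have := heven a ha1 i
      rw [show s = 2 * a by omega]
      exact this
    · by_cases hsk : s = k
      · rw [hsk]; exact hk_pos
      · have hlt : k < s := lt_of_le_of_ne hs (Ne.symm hsk)
        have hev : Even (s - k) := by
          rcases hk_odd with ⟨a, ha⟩
          rcases ho with ⟨b, hb⟩
          exact ⟨b - a, by omega⟩
        obtain ⟨c, hc⟩ := hev
        have hc1 : 1 ≤ c := by omega
        have := hdadd k (2 * c) i hk_pos (heven c hc1 i)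
        rw [show s = k + 2 * c by omega]
        exact this
  have hprop : ∀ i j, ∃ N, ∀ t, N ≤ t → 0 < (M ^ t) i j := by
    intro i j
    obtain ⟨a, ha1, hapos⟩ := hsc' i j
    obtain ⟨K, hK1, hKret⟩ := hret i
    refine ⟨K + a, fun t ht => ?_⟩
    have h1 : 0 < (M ^ (t - a)) i i := hKret (t - a) (by omega)
    have h2 := lt_of_lt_of_le (mul_pos h1 hapos) (pow_add_entry_ge h0 (t - a) a i i j)
    rw [show t - a + a = t by omega] at h2
    exact h2
  choose N hN using hprop
  set m := (Finset.univ ×ˢ Finset.univ).sup (fun p : Fin n × Fin n => N p.1 p.2) + 1 with hm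
  refine ⟨m, by omega, fun i j => ?_⟩
  apply hN i j
  have hle : N i j ≤ (Finset.univ ×ˢ Finset.univ).sup (fun p : Fin n × Fin n => N p.1 p.2) :=
    Finset.le_sup (f := fun p : Fin n × Fin n => N p.1 p.2) (by simp : (i, j) ∈ _)
  omega

lemma sign_conj_pow {A : Matrix (Fin n) (Fin n) ℝ} {g : Fin n → ℝ}
    (hg2 : ∀ i, g i * g i = 1) (t : ℕ) (i j : Fin n) :
    ((Matrix.of fun i j => g i * A i j * g j) ^ t) i j = g i * (A ^ t) i j * g j := by
  induction t generalizing i j with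
  | zero =>
    simp only [pow_zero, Matrix.one_apply]
    by_cases h : i = j
    · subst h; simp [hg2 i]
    · simp [h]
  | succ t ih =>
    rw [pow_succ, pow_succ, Matrix.mul_apply, Matrix.mul_apply, Finset.mul_sum,
      Finset.sum_mul]
    refine Finset.sum_congr rfl fun k _ => ?_
    rw [ih i k]
    simp only [Matrix.of_apply]
    linear_combination (g i * (A ^ t) i k * A k j * g j) * hg2 k

end Helpers

/-- social influence. For a strongly connected signed interaction
matrix `A`, the existence of a stochastic left eigenvector `s` of `|A|` and a
sign assignment `g` such that from any start every agent's opinion converges to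
`g(i)·Σ_j g(j)·s_j·(b₀)_j` is equivalent to `A` being opposition bipartite and
aperiodic. -/
theorem stmt_14 (n : ℕ) (hn : 2 ≤ n) (A : Matrix (Fin n) (Fin n) ℝ)
    (hsym : A.IsSymm) (hdiag : ∀ i, A i i = 0) (hrow : ∀ i, ∑ j, |A i j| = 1)
    (hsc : StronglyConnected A) :
    ((∃ s : Fin n → ℝ, Matrix.vecMul s (absMat A) = s ∧ (∑ j, s j) = 1 ∧
        ∃ g : Fin n → ℝ, (∀ i, g i = 1 ∨ g i = -1) ∧
          ∀ (b₀ : Fin n → ℝ) (i : Fin n),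
            Tendsto (fun t => (A ^ t).mulVec b₀ i) atTop
              (nhds (g i * ∑ j, g j * s j * b₀ j))) ↔
      (OppBip A ∧ Aperiodic A)) := by
  classical
  have hMabs : ∀ i j, absMat A i j = |A i j| := fun i j => rfl
  have hM0 : ∀ i j, 0 ≤ absMat A i j := fun i j => abs_nonneg _
  have hMsym : (absMat A).IsSymm := by
    ext i j
    simp only [Matrix.transpose_apply, hMabs]
    rw [hsym.apply j i]
  have hMrow : ∀ i, ∑ j, absMat A i j = 1 := fun i => by
    simpa only [hMabs] using hrow i
  constructor
  · -- forward direction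
    rintro ⟨s, hs, hsum, g, hg, hconv⟩
    have hg2 : ∀ i, g i * g i = 1 := by
      intro i; rcases hg i with h | h <;> rw [h] <;> norm_num
    have hgabs : ∀ i, |g i| = 1 := by
      intro i; rcases hg i with h | h <;> rw [h] <;> norm_num
    -- entrywise limit of A^t
    have hentry : ∀ i j, Tendsto (fun t => (A ^ t) i j) atTop (nhds (g i * (g j * s j))) := by
      intro i j
      have h1 := hconv (Pi.single j 1) i
      simp only [Matrix.mulVec_single, mul_one, Pi.single_apply, mul_ite, mul_zero,
        Finset.sum_ite_eq', Finset.mem_univ, if_true] at h1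
      simpa [Matrix.col_apply] using h1
    set B : Matrix (Fin n) (Fin n) ℝ := Matrix.of (fun i j => g i * A i j * g j) with hB
    have hBt : ∀ (t : ℕ) (i j : Fin n), (B ^ t) i j = g i * (A ^ t) i j * g j :=
      fun t i j => sign_conj_pow hg2 t i j
    have hBlim : ∀ i j, Tendsto (fun t => (B ^ t) i j) atTop (nhds (s j)) := by
      intro i j
      have h1 := ((hentry i j).const_mul (g i)).mul_const (g j)
      have h2 : (fun t => (B ^ t) i j) = fun t => g i * (A ^ t) i j * g j := by
        funext t; exact hBt t i j
      rw [h2]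
      have h3 : g i * (g i * (g j * s j)) * g j = s j := by
        linear_combination (g j * s j * g j) * hg2 i + s j * hg2 j
      rwa [h3] at h1
    obtain ⟨j₀, _, hj₀⟩ : ∃ j₀ ∈ Finset.univ, s j₀ ≠ 0 :=
      Finset.exists_ne_zero_of_sum_ne_zero (by rw [hsum]; norm_num)
    have hBrow : ∀ i, ∑ k, B i k = 1 := by
      intro i
      have hLHS : Tendsto (fun t => (B ^ (t + 1)) i j₀) atTop (nhds (s j₀)) :=
        (hBlim i j₀).comp (tendsto_add_atTop_nat 1)
      have hstep : ∀ t, (B ^ (t + 1)) i j₀ = ∑ k, B i k * (B ^ t) k j₀ := by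
        intro t
        rw [pow_succ', Matrix.mul_apply]
      have hRHS : Tendsto (fun t => (B ^ (t + 1)) i j₀) atTop
          (nhds ((∑ k, B i k) * s j₀)) := by
        have h4 : Tendsto (fun t => ∑ k, B i k * (B ^ t) k j₀) atTop
            (nhds (∑ k, B i k * s j₀)) :=
          tendsto_finset_sum _ fun k _ => (hBlim k j₀).const_mul (B i k)
        rw [← Finset.sum_mul] at h4
        simpa only [hstep] using h4
      have := tendsto_nhds_unique hLHS hRHS
      have h5 : (∑ k, B i k) * s j₀ = 1 * s j₀ := by rw [one_mul, ← this]
      exact mul_right_cancel₀ hj₀ h5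
    have habs : ∀ i k, |B i k| = |A i k| := by
      intro i k
      show |g i * A i k * g k| = |A i k|
      rw [abs_mul, abs_mul, hgabs i, hgabs k, one_mul, mul_one]
    have hBnonneg : ∀ i k, 0 ≤ B i k := by
      intro i k
      have h1 : ∑ k', (|B i k'| - B i k') = 0 := by
        rw [Finset.sum_sub_distrib]
        rw [Finset.sum_congr rfl fun k' _ => habs i k', hrow i, hBrow i, sub_self]
      have h2 := (Finset.sum_eq_zero_iff_of_nonneg
        (fun k' _ => sub_nonneg.mpr (le_abs_self (B i k')))).mp h1 k (Finset.mem_univ k)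
      have h3 : |B i k| = B i k := by linarith [sub_eq_zero.mp h2]
      linarith [abs_nonneg (B i k), h3]
    have hA_eq : ∀ i j, A i j = g i * B i j * g j := by
      intro i j
      show A i j = g i * (g i * A i j * g j) * g j
      linear_combination (- (A i j * g j * g j)) * hg2 i + (- (A i j)) * hg2 j
    constructor
    · -- OppBip
      refine ⟨{i | g i = 1}, fun i j => ⟨?_, ?_⟩⟩
      · rintro (⟨hi, hj⟩ | ⟨hi, hj⟩)
        · have hgi : g i = 1 := hi
          have hgj : g j = 1 := hj
          rw [hA_eq i j, hgi, hgj, one_mul, mul_one]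
          exact hBnonneg i j
        · have hgi : g i = -1 := by
            rcases hg i with h | h
            · exact absurd h hi
            · exact h
          have hgj : g j = -1 := by
            rcases hg j with h | h
            · exact absurd h hj
            · exact h
          rw [hA_eq i j, hgi, hgj]
          simpa using hBnonneg i j
      · rintro (⟨hi, hj⟩ | ⟨hi, hj⟩)
        · have hgi : g i = 1 := hi
          have hgj : g j = -1 := by
            rcases hg j with h | h
            · exact absurd h hj
            · exact h
          rw [hA_eq i j, hgi, hgj]
          simpa using hBnonneg i j
        · have hgi : g i = -1 := by
            rcases hg i with h | h
            · exact absurd h hi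
            · exact h
          have hgj : g j = 1 := hj
          rw [hA_eq i j, hgi, hgj]
          simpa using hBnonneg i j
    · -- Aperiodic
      have hMeqB : absMat A = B := by
        ext i j
        rw [hMabs i j, ← habs i j, abs_of_nonneg (hBnonneg i j)]
      intro i d hd
      have hlim : Tendsto (fun t => (absMat A ^ t) i i) atTop (nhds (s i)) := by
        rw [hMeqB]
        exact hBlim i i
      have h2k : Tendsto (fun k => (absMat A ^ (2 * k)) i i) atTop (nhds (s i)) := by
        refine hlim.comp (tendsto_atTop_atTop.2 fun b => ⟨b, fun k hk => by omega⟩)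
      have hsi : (1:ℝ) / n ≤ s i :=
        ge_of_tendsto' h2k fun k => diag_pow_two_mul_ge (by omega) hMsym hMrow k i
      have hsipos : 0 < s i := by
        have : (0:ℝ) < 1 / n := by
          have : (0:ℝ) < n := by positivity
          positivity
        linarith
      have hev : ∀ᶠ t in atTop, 0 < (absMat A ^ t) i i :=
        hlim.eventually (eventually_gt_nhds hsipos)
      obtain ⟨T, hT⟩ := eventually_atTop.mp hev
      have h1 : d ∣ T + 1 := hd (T + 1) (by omega) (hT (T + 1) (by omega))
      have h2 : d ∣ T + 2 := hd (T + 2) (by omega) (hT (T + 2) (by omega))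
      have h3 : d ∣ 1 := by
        have := Nat.dvd_sub h2 h1
        rwa [show T + 2 - (T + 1) = 1 by omega] at this
      exact Nat.dvd_one.mp h3
  · -- backward direction
    rintro ⟨⟨S, hS⟩, hap⟩
    set g : Fin n → ℝ := fun i => if i ∈ S then 1 else -1 with hgdef
    have hg : ∀ i, g i = 1 ∨ g i = -1 := by
      intro i
      by_cases h : i ∈ S
      · left; simp [hgdef, h]
      · right; simp [hgdef, h]
    have hg2 : ∀ i, g i * g i = 1 := by
      intro i; rcases hg i with h | h <;> rw [h] <;> norm_num
    have hA : ∀ i j, A i j = g i * absMat A i j * g j := by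
      intro i j
      by_cases hi : i ∈ S <;> by_cases hj : j ∈ S
      · have h1 : 0 ≤ A i j := (hS i j).1 (Or.inl ⟨hi, hj⟩)
        simp [hgdef, hi, hj, hMabs, abs_of_nonneg h1]
      · have h1 : A i j ≤ 0 := (hS i j).2 (Or.inl ⟨hi, hj⟩)
        simp [hgdef, hi, hj, hMabs, abs_of_nonpos h1]
      · have h1 : A i j ≤ 0 := (hS i j).2 (Or.inr ⟨hi, hj⟩)
        simp [hgdef, hi, hj, hMabs, abs_of_nonpos h1]
      · have h1 : 0 ≤ A i j := (hS i j).1 (Or.inr ⟨hi, hj⟩)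
        simp [hgdef, hi, hj, hMabs, abs_of_nonneg h1]
    have hAconj : A = Matrix.of (fun i j => g i * absMat A i j * g j) := by
      ext i j
      exact hA i j
    obtain ⟨m, hm1, hmpos⟩ := primitive hn hM0 hMrow hMsym hsc hap
    have hneP : ((Finset.univ : Finset (Fin n × Fin n))).Nonempty :=
      ⟨(⟨0, by omega⟩, ⟨0, by omega⟩), Finset.mem_univ _⟩
    set ε : ℝ := Finset.univ.inf' hneP (fun p : Fin n × Fin n => (absMat A ^ m) p.1 p.2)
      with hεdef
    have hε : 0 < ε := by
      rw [hεdef]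
      rw [Finset.lt_inf'_iff]
      exact fun p _ => hmpos p.1 p.2
    have hεle : ∀ i j, ε ≤ (absMat A ^ m) i j := fun i j =>
      Finset.inf'_le _ (Finset.mem_univ (i, j))
    have hnR : (0:ℝ) < n := by
      have : (2:ℝ) ≤ n := by exact_mod_cast hn
      linarith
    refine ⟨fun _ => 1 / n, ?_, ?_, g, hg, ?_⟩
    · -- vecMul
      funext j
      show ∑ i, (1 / (n:ℝ)) * absMat A i j = 1 / n
      rw [← Finset.mul_sum]
      have hcol : ∑ i, absMat A i j = 1 := by
        rw [Finset.sum_congr rfl fun i _ => hMsym.apply j i]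
        exact hMrow j
      rw [hcol, mul_one]
    · -- sum of s
      rw [Finset.sum_const, Finset.card_univ, Fintype.card_fin, nsmul_eq_mul]
      field_simp
    · -- convergence
      intro b i
      have hAt : ∀ t, (A ^ t).mulVec b i
          = g i * ((absMat A ^ t).mulVec (fun j => g j * b j) i) := by
        intro t
        show ∑ j, (A ^ t) i j * b j = g i * ∑ j, (absMat A ^ t) i j * (g j * b j)
        rw [Finset.mul_sum]
        refine Finset.sum_congr rfl fun j _ => ?_
        have h1 : (A ^ t) i j = g i * (absMat A ^ t) i j * g j := by
          conv_lhs => rw [hAconj]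
          exact sign_conj_pow hg2 t i j
        rw [h1]
        ring
      have hconv := (stoch_conv hn hM0 hMrow hMsym hm1 hε hεle (fun j => g j * b j) i).const_mul
        (g i)
      have hgoal : (g i * ∑ j, g j * (fun _ => 1 / (n:ℝ)) j * b j)
          = g i * ((∑ j, g j * b j) / n) := by
        congr 1
        rw [Finset.sum_div]
        refine Finset.sum_congr rfl fun j _ => ?_
        ring
      rw [hgoal]
      simpa only [hAt] using hconv
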